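/- Let η ∈ M₂(ℤ) with det(η) ≠ 0 be primitive, and set m = |det(η)|. Then the image of the map M₂(ℤ/mℤ) → M₂(ℤ/mℤ) sending A ↦ adj(η)·A·η (where adj denotes the adjugate, reduced mod m) is a cyclic ℤ/mℤ-submodule of M₂(ℤ/mℤ) of cardinality m; in particular it is isomorphic to ℤ/mℤ as a ℤ/mℤ-module. -/

import Mathlib

open Matrix

lemma sandwich_aux {R : Type*} [CommRing R] (x y : R) (hxy : x * y = 0)
    (B : Matrix (Fin 2) (Fin 2) R) :
    adjugate !![x,0;0,y] * B * !![x,0;0,y] = !![0, y^2 * B 0 1; x^2 * B 1 0, 0] := by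
  rw [Matrix.adjugate_fin_two_of]
  ext i j
  fin_cases i <;> fin_cases j <;>
    simp [Matrix.mul_apply, Matrix.vecMul, dotProduct, Fin.sum_univ_two] <;>
    first
      | ring1
      | linear_combination (B 0 0) * hxy
      | linear_combination (B 1 1) * hxy

lemma cast_zero_of_dvd {m : ℕ} {k : ℤ} (h : (m:ℤ) ∣ k) : ((k : ℤ) : ZMod m) = 0 :=
  (ZMod.intCast_zmod_eq_zero_iff_dvd k m).mpr h

lemma crt_aux (m : ℕ) (a0 a1 u v p q : ℤ) (huv : u*a0 + v*a1 = 1) (hma : (m:ℤ) ∣ a0*a1) :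
    ∃ c : ZMod m, c * (a1:ZMod m)^2 = (p:ZMod m) * (a1:ZMod m)^2 ∧
      c * (a0:ZMod m)^2 = (q:ZMod m) * (a0:ZMod m)^2 := by
  refine ⟨((p * v * a1 + q * u * a0 : ℤ) : ZMod m), ?_, ?_⟩
  · have key : (p * v * a1 + q * u * a0) * a1^2 = p * a1^2 + ((q - p) * u * a1) * (a0 * a1) := by
      linear_combination (a1^2 * p) * huv
    calc ((p * v * a1 + q * u * a0 : ℤ) : ZMod m) * (a1:ZMod m)^2
        = (((p * v * a1 + q * u * a0) * a1^2 : ℤ) : ZMod m) := by push_cast; ring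
      _ = ((p * a1^2 : ℤ) : ZMod m) + (((q - p) * u * a1 : ℤ) : ZMod m) * ((a0 * a1 : ℤ) : ZMod m) := by
          rw [key]; push_cast; ring
      _ = (p:ZMod m) * (a1:ZMod m)^2 := by rw [cast_zero_of_dvd hma]; push_cast; ring
  · have key : (p * v * a1 + q * u * a0) * a0^2 = q * a0^2 + ((p - q) * v * a0) * (a0 * a1) := by
      linear_combination (a0^2 * q) * huv
    calc ((p * v * a1 + q * u * a0 : ℤ) : ZMod m) * (a0:ZMod m)^2
        = (((p * v * a1 + q * u * a0) * a0^2 : ℤ) : ZMod m) := by push_cast; ring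
      _ = ((q * a0^2 : ℤ) : ZMod m) + (((p - q) * v * a0 : ℤ) : ZMod m) * ((a0 * a1 : ℤ) : ZMod m) := by
          rw [key]; push_cast; ring
      _ = (q:ZMod m) * (a0:ZMod m)^2 := by rw [cast_zero_of_dvd hma]; push_cast; ring

lemma inj_aux {m : ℕ} {a0 a1 c : ℤ} (hcop : IsCoprime a0 a1) (hm : m = (a0*a1).natAbs)
    (h1 : (m:ℤ) ∣ c * a1^2) (h0 : (m:ℤ) ∣ c * a0^2) : (m:ℤ) ∣ c := by
  subst hm
  rw [Int.natAbs_dvd] at h1 h0 ⊢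
  have ha0 : a0 ∣ c :=
    (hcop.pow_right (n := 2)).dvd_of_dvd_mul_right ((dvd_mul_right a0 a1).trans h1)
  have ha1 : a1 ∣ c :=
    (hcop.symm.pow_right (n := 2)).dvd_of_dvd_mul_right ((dvd_mul_left a1 a0).trans h0)
  exact hcop.mul_dvd ha0 ha1

/-- Smith normal form for 2×2 integer matrices with nonzero determinant. -/
lemma snf_two (η : Matrix (Fin 2) (Fin 2) ℤ) (hdet : η.det ≠ 0) :
    ∃ (U V U' V' : Matrix (Fin 2) (Fin 2) ℤ) (a : Fin 2 → ℤ),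
      U * U' = 1 ∧ U' * U = 1 ∧ V * V' = 1 ∧ V' * V = 1 ∧
      η = U * Matrix.diagonal a * V := by
  classical
  set f : (Fin 2 → ℤ) →ₗ[ℤ] (Fin 2 → ℤ) := η.mulVecLin with hfdef
  have hinj : Function.Injective f := by
    rw [← LinearMap.ker_eq_bot, hfdef, Matrix.ker_mulVecLin_eq_bot_iff]
    intro w hw
    have h2 : η.adjugate *ᵥ (η *ᵥ w) = 0 := by rw [hw, Matrix.mulVec_zero]
    rw [Matrix.mulVec_mulVec, Matrix.adjugate_mul] at h2
    funext i
    have h3 := congrFun h2 i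
    simp only [Matrix.smul_mulVec, Matrix.one_mulVec, Pi.smul_apply, smul_eq_mul,
      Pi.zero_apply] at h3
    rcases mul_eq_zero.mp h3 with h | h
    · exact absurd h hdet
    · exact h
  obtain ⟨n, ⟨bM, bN, emb, a, hsnf⟩⟩ :=
    Submodule.smithNormalForm (Pi.basisFun ℤ (Fin 2)) (LinearMap.range f)
  set e : (Fin 2 → ℤ) ≃ₗ[ℤ] LinearMap.range f := LinearEquiv.ofInjective f hinj with hedef
  set c : Module.Basis (Fin n) ℤ (Fin 2 → ℤ) := bN.map e.symm with hcdef
  have hn : n = 2 := by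
    have h := Module.finrank_eq_card_basis c
    simpa using h.symm
  subst hn
  have hbij : Function.Bijective emb := Finite.injective_iff_bijective.mp emb.injective
  set σ : Fin 2 ≃ Fin 2 := Equiv.ofBijective emb hbij with hσdef
  set bM' : Module.Basis (Fin 2) ℤ (Fin 2 → ℤ) := bM.reindex σ.symm with hbM'def
  have hfc : ∀ i, f (c i) = a i • bM' i := by
    intro i
    have h1 : f (c i) = (bN i : Fin 2 → ℤ) := by
      rw [hcdef, Module.Basis.map_apply]
      have : f (e.symm (bN i)) = ((e (e.symm (bN i)) : LinearMap.range f) : Fin 2 → ℤ) := rfl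
      rw [this, e.apply_symm_apply]
    rw [h1, hsnf i, hbM'def]
    simp [hσdef]
  set std := Pi.basisFun ℤ (Fin 2) with hstd
  refine ⟨std.toMatrix bM', c.toMatrix std, bM'.toMatrix std, std.toMatrix c, a,
    Module.Basis.toMatrix_mul_toMatrix_flip _ _, Module.Basis.toMatrix_mul_toMatrix_flip _ _,
    Module.Basis.toMatrix_mul_toMatrix_flip _ _, Module.Basis.toMatrix_mul_toMatrix_flip _ _, ?_⟩
  have hD : LinearMap.toMatrix c bM' f = Matrix.diagonal a := by
    ext i j
    rw [LinearMap.toMatrix_apply, hfc j]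
    rw [_root_.map_smul, Module.Basis.repr_self]
    simp only [Finsupp.smul_single, smul_eq_mul, mul_one, Finsupp.single_apply,
      Matrix.diagonal_apply]
    by_cases h : i = j
    · subst h; simp
    · simp [h, Ne.symm h]
  have hcomp := basis_toMatrix_mul_linearMap_toMatrix_mul_basis_toMatrix
    (b := std) (b' := c) (c := std) (c' := bM') (f := f)
  rw [hD] at hcomp
  have hfη : LinearMap.toMatrix std std f = η := by
    rw [hstd, LinearMap.toMatrix_eq_toMatrix', hfdef, ← Matrix.toLin'_apply',
      LinearMap.toMatrix'_toLin']
  rw [hfη] at hcomp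
  exact hcomp.symm

/-- Let `η ∈ M₂(ℤ)` be primitive with `det η ≠ 0` and set `m = |det η|`.
The image of the map `A ↦ adj(η)·A·η` on `M₂(ℤ/mℤ)` is a cyclic
`ℤ/mℤ`-submodule of cardinality `m` (hence isomorphic to `ℤ/mℤ`): it is
generated by a single element `N` under `ℤ/mℤ`-scaling. -/
theorem adj_conj_image_cyclic
    (η : Matrix (Fin 2) (Fin 2) ℤ)
    (hprim : ∀ d : ℤ, (∀ i j, d ∣ η i j) → IsUnit d)
    (hdet : η.det ≠ 0) :
    ∀ m : ℕ, m = η.det.natAbs →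
    ∃ N : Matrix (Fin 2) (Fin 2) (ZMod m),
      (∃ A : Matrix (Fin 2) (Fin 2) (ZMod m),
        N = (η.adjugate.map (Int.cast : ℤ → ZMod m)) * A *
              (η.map (Int.cast : ℤ → ZMod m))) ∧
      {X : Matrix (Fin 2) (Fin 2) (ZMod m) |
          ∃ A, X = (η.adjugate.map (Int.cast : ℤ → ZMod m)) * A *
              (η.map (Int.cast : ℤ → ZMod m))}
        = {X | ∃ c : ZMod m, X = c • N} ∧
      Nat.card {X : Matrix (Fin 2) (Fin 2) (ZMod m) |
          ∃ A, X = (η.adjugate.map (Int.cast : ℤ → ZMod m)) * A *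
              (η.map (Int.cast : ℤ → ZMod m))} = m := by
  intro m hm
  obtain ⟨U, V, U', V', a, hUU', hU'U, hVV', hV'V, hη⟩ := snf_two η hdet
  -- determinant facts
  have hUdet : IsUnit U.det :=
    IsUnit.of_mul_eq_one _ (by rw [← Matrix.det_mul, hUU', Matrix.det_one])
  have hVdet : IsUnit V.det :=
    IsUnit.of_mul_eq_one _ (by rw [← Matrix.det_mul, hVV', Matrix.det_one])
  have hU1 : U.det = 1 ∨ U.det = -1 := Int.isUnit_iff.mp hUdet
  have hV1 : V.det = 1 ∨ V.det = -1 := Int.isUnit_iff.mp hVdet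
  have hdet_eq : η.det = U.det * (a 0 * a 1) * V.det := by
    rw [hη, Matrix.det_mul, Matrix.det_mul, Matrix.det_diagonal, Fin.prod_univ_two]
  have hma : m = (a 0 * a 1).natAbs := by
    rw [hm, hdet_eq]
    rcases hU1 with h | h <;> rcases hV1 with h' | h' <;>
      simp [h, h', Int.natAbs_mul]
  have hmdvd : (m:ℤ) ∣ a 0 * a 1 := by rw [hma]; exact Int.natAbs_dvd.mpr dvd_rfl
  -- coprimality from primitivity
  have hcop : IsCoprime (a 0) (a 1) := by
    have hgd : ∀ i j, (Int.gcd (a 0) (a 1) : ℤ) ∣ η i j := by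
      intro i j
      rw [hη]
      have hent : (U * Matrix.diagonal a * V) i j = ∑ k, U i k * a k * V k j := by
        simp [Matrix.mul_apply, Matrix.mul_diagonal]
      rw [hent]
      refine Finset.dvd_sum fun k _ => ?_
      fin_cases k
      · exact ((Int.gcd_dvd_left _ _).mul_left (U i 0)).mul_right (V 0 j)
      · exact ((Int.gcd_dvd_right _ _).mul_left (U i 1)).mul_right (V 1 j)
    have hu := hprim _ hgd
    rw [Int.isUnit_iff] at hu
    have hg1 : Int.gcd (a 0) (a 1) = 1 := by
      rcases hu with h | h
      · exact_mod_cast h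
      · exfalso
        have : (0:ℤ) ≤ (Int.gcd (a 0) (a 1) : ℤ) := Int.natCast_nonneg _
        omega
    exact Int.isCoprime_iff_gcd_eq_one.mpr hg1
  obtain ⟨u, v, huv⟩ := hcop
  -- pass to ZMod m
  set φ : ℤ →+* ZMod m := Int.castRingHom (ZMod m) with hφ
  set ψ : Matrix (Fin 2) (Fin 2) ℤ →+* Matrix (Fin 2) (Fin 2) (ZMod m) := φ.mapMatrix with hψ
  have hmap : ∀ M : Matrix (Fin 2) (Fin 2) ℤ, M.map (Int.cast : ℤ → ZMod m) = ψ M :=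
    fun M => rfl
  set x : ZMod m := ((a 0 : ℤ) : ZMod m) with hx
  set y : ZMod m := ((a 1 : ℤ) : ZMod m) with hy
  have hxy : x * y = 0 := by
    rw [hx, hy, ← Int.cast_mul]; exact cast_zero_of_dvd hmdvd
  set Db : Matrix (Fin 2) (Fin 2) (ZMod m) := !![x,0;0,y] with hDb
  have hDdiag : ψ (Matrix.diagonal a) = Db := by
    ext i j
    fin_cases i <;> fin_cases j <;>
      simp [hψ, RingHom.mapMatrix_apply, Matrix.map_apply, Matrix.diagonal, hDb, hx, hy, hφ]
  have hηbar : ψ η = ψ U * Db * ψ V := by rw [hη, ψ.map_mul, ψ.map_mul, hDdiag]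
  have hadj : η.adjugate.map (Int.cast : ℤ → ZMod m)
      = adjugate (ψ V) * adjugate Db * adjugate (ψ U) := by
    rw [hmap, hψ, RingHom.map_adjugate, ← hψ, hηbar, Matrix.adjugate_mul_distrib,
      Matrix.adjugate_mul_distrib, Matrix.mul_assoc]
  -- unit scalars
  set εU : ZMod m := φ U.det with hεU
  set εV : ZMod m := φ V.det with hεV
  have hεU2 : εU * εU = 1 := by rcases hU1 with h | h <;> simp [hεU, h]
  have hεV2 : εV * εV = 1 := by rcases hV1 with h | h <;> simp [hεV, h]
  have hdetψU : (ψ U).det = εU := by rw [hεU, hψ, RingHom.map_det]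
  have hdetψV : (ψ V).det = εV := by rw [hεV, hψ, RingHom.map_det]
  have hadjU : adjugate (ψ U) * ψ U = εU • 1 := by rw [Matrix.adjugate_mul, hdetψU]
  have hVadj : ψ V * adjugate (ψ V) = εV • 1 := by rw [Matrix.mul_adjugate, hdetψV]
  have hψUU' : ψ U * ψ U' = 1 := by rw [← ψ.map_mul, hUU', ψ.map_one]
  have hψU'U : ψ U' * ψ U = 1 := by rw [← ψ.map_mul, hU'U, ψ.map_one]
  have hψVV' : ψ V * ψ V' = 1 := by rw [← ψ.map_mul, hVV', ψ.map_one]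
  have hψV'V : ψ V' * ψ V = 1 := by rw [← ψ.map_mul, hV'V, ψ.map_one]
  -- basic objects
  set B₀ : Matrix (Fin 2) (Fin 2) (ZMod m) := !![0,1;1,0] with hB₀
  set M₁ : Matrix (Fin 2) (Fin 2) (ZMod m) := !![0, y^2; x^2, 0] with hM₁
  have hB₀M₁ : adjugate Db * B₀ * Db = M₁ := by
    rw [hDb, sandwich_aux x y hxy]
    simp [hB₀, hM₁]
  set A₀ : Matrix (Fin 2) (Fin 2) (ZMod m) := εU • (ψ U * B₀ * ψ U') with hA₀def
  have hA₀ : adjugate (ψ U) * A₀ * ψ U = B₀ := by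
    have h1 : adjugate (ψ U) * A₀ * ψ U
        = εU • (adjugate (ψ U) * ψ U * (B₀ * (ψ U' * ψ U))) := by
      rw [hA₀def]
      simp only [Matrix.mul_smul, Matrix.smul_mul, Matrix.mul_assoc]
    rw [h1, hψU'U, Matrix.mul_one, hadjU, Matrix.smul_mul, Matrix.one_mul, smul_smul, hεU2,
      one_smul]
  -- key rewriting of the defining expression
  have key : ∀ A : Matrix (Fin 2) (Fin 2) (ZMod m),
      (η.adjugate.map (Int.cast : ℤ → ZMod m)) * A * (η.map (Int.cast : ℤ → ZMod m))
      = adjugate (ψ V) * (adjugate Db * (adjugate (ψ U) * A * ψ U) * Db) * ψ V := by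
    intro A
    rw [hadj, hmap, hηbar]
    simp only [Matrix.mul_assoc]
  set N : Matrix (Fin 2) (Fin 2) (ZMod m) := adjugate (ψ V) * M₁ * ψ V with hN
  have hNimg : (η.adjugate.map (Int.cast : ℤ → ZMod m)) * A₀ *
      (η.map (Int.cast : ℤ → ZMod m)) = N := by
    rw [key, hA₀, hB₀M₁]
  -- membership description
  have hsub : ∀ A : Matrix (Fin 2) (Fin 2) (ZMod m), ∃ c : ZMod m,
      (η.adjugate.map (Int.cast : ℤ → ZMod m)) * A * (η.map (Int.cast : ℤ → ZMod m))
        = c • N := by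
    intro A
    set B := adjugate (ψ U) * A * ψ U with hB
    obtain ⟨p, hp⟩ := ZMod.intCast_surjective (B 0 1)
    obtain ⟨q, hq⟩ := ZMod.intCast_surjective (B 1 0)
    obtain ⟨c, hc1, hc0⟩ := crt_aux m (a 0) (a 1) u v p q huv hmdvd
    refine ⟨c, ?_⟩
    rw [key, ← hB]
    have hc1' : c * y ^ 2 = B 0 1 * y ^ 2 := by rw [← hp]; exact hc1
    have hc0' : c * x ^ 2 = B 1 0 * x ^ 2 := by rw [← hq]; exact hc0
    have hmid : adjugate Db * B * Db = c • M₁ := by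
      rw [hDb, sandwich_aux x y hxy, hM₁]
      ext i j
      fin_cases i <;> fin_cases j <;> simp [Matrix.smul_apply]
      · rw [mul_comm]; exact hc1'.symm
      · rw [mul_comm]; exact hc0'.symm
    rw [hmid, hN]
    simp only [Matrix.mul_smul, Matrix.smul_mul]
  -- injectivity of c ↦ c • N
  have hinjN : ∀ c : ZMod m, c • N = 0 → c = 0 := by
    intro c hc
    have h1 : ψ V * (c • N) * ψ V' = c • (εV • M₁) := by
      rw [hN]
      have : ψ V * (adjugate (ψ V) * M₁ * ψ V) * ψ V'
          = ψ V * adjugate (ψ V) * (M₁ * (ψ V * ψ V')) := by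
        simp only [Matrix.mul_assoc]
      rw [Matrix.mul_smul, Matrix.smul_mul, this, hψVV', Matrix.mul_one, hVadj,
        Matrix.smul_mul, Matrix.one_mul]
    rw [hc] at h1
    simp only [Matrix.mul_zero, Matrix.zero_mul] at h1
    have h2 : c • M₁ = 0 := by
      have h3 : εV • (0 : Matrix (Fin 2) (Fin 2) (ZMod m)) = εV • (c • εV • M₁) :=
        congrArg _ h1
      rw [smul_zero, smul_smul, smul_smul, show εV * c * εV = c by
        rw [mul_comm εV c, mul_assoc, hεV2, mul_one]] at h3
      exact h3.symm
    obtain ⟨c', rfl⟩ := ZMod.intCast_surjective c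
    have e1 : ((c' * (a 1)^2 : ℤ) : ZMod m) = 0 := by
      have h4 := congrFun (congrFun h2 0) 1
      simp [hM₁, Matrix.smul_apply] at h4
      push_cast
      exact h4
    have e0 : ((c' * (a 0)^2 : ℤ) : ZMod m) = 0 := by
      have h4 := congrFun (congrFun h2 1) 0
      simp [hM₁, Matrix.smul_apply] at h4
      push_cast
      exact h4
    rw [ZMod.intCast_zmod_eq_zero_iff_dvd] at e1 e0
    exact cast_zero_of_dvd (inj_aux ⟨u, v, huv⟩ hma e1 e0)
  -- set equality
  have hseteq : {X : Matrix (Fin 2) (Fin 2) (ZMod m) |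
      ∃ A, X = (η.adjugate.map (Int.cast : ℤ → ZMod m)) * A *
          (η.map (Int.cast : ℤ → ZMod m))} = {X | ∃ c : ZMod m, X = c • N} := by
    ext X
    constructor
    · rintro ⟨A, rfl⟩
      obtain ⟨c, hc⟩ := hsub A
      exact ⟨c, hc⟩
    · rintro ⟨c, rfl⟩
      refine ⟨c • A₀, ?_⟩
      rw [Matrix.mul_smul, Matrix.smul_mul, hNimg]
  refine ⟨N, ⟨A₀, hNimg.symm⟩, hseteq, ?_⟩
  -- cardinality
  rw [hseteq]
  have hrange : {X : Matrix (Fin 2) (Fin 2) (ZMod m) | ∃ c : ZMod m, X = c • N}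
      = Set.range (fun c : ZMod m => c • N) := by
    ext X; simp [eq_comm]
  rw [hrange]
  have hinj2 : Function.Injective (fun c : ZMod m => c • N) := by
    intro c c' h
    have h' : c • N = c' • N := h
    have hz : (c - c') • N = 0 := by rw [sub_smul, h', sub_self]
    exact sub_eq_zero.mp (hinjN _ hz)
  rw [Nat.card_range_of_injective hinj2, Nat.card_zmod]
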